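/- Fix a nonzero complex number ℏ and complex numbers δ, δ′, c with (1+c)² ≠ δδ′ and (1−c)² ≠ δδ′, set Δ(t) = e^t + e^{−t} − c(e^t − e^{−t}) and D(t) = Δ(t)² − (e^t − e^{−t})²·δδ′, and assume D(s) ≠ 0 for every real s. Let g : ℝ → ℂ be the continuous function with g(s)² = D(s) and g(0) = 2, and define G(t,u,v) = (2/g(t/2))·exp( (1/(iℏ))·((e^{t/2} − e^{−t/2})/D(t/2))·( (e^{t/2} − e^{−t/2})(δ′u² + δv²) + 2Δ(t/2)uv ) ). Then the limit w = lim_{s→−∞} e^{s} g(s) exists and satisfies w² = (1+c)² − δδ′, and, uniformly on compact subsets of ℂ², lim_{t→−∞} e^{−t/2} G(t,u,v) = (2/w)·exp( (1/(iℏ))·(δ′u² − 2(1+c)uv + δv²)/((1+c)² − δδ′) ) and lim_{t→+∞} e^{−t/2} G(t,u,v) = 0. -/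

import Mathlib

open Complex Filter

lemma aux_sqrt_limit (f : ℝ → ℂ) (hf : Continuous f) (L : ℂ) (hL : L ≠ 0)
    (h : Tendsto (fun s => (f s) ^ 2) atBot (nhds L)) :
    ∃ w : ℂ, w ^ 2 = L ∧ Tendsto f atBot (nhds w) := by
  obtain ⟨r, hr⟩ := IsAlgClosed.exists_pow_nat_eq L (n := 2) (by norm_num)
  have hr0 : r ≠ 0 := fun h0 => hL (by rw [← hr, h0]; ring)
  have hrpos : 0 < ‖r‖ := norm_pos_iff.mpr hr0
  have hnorm : Tendsto (fun s => ‖(f s) ^ 2 - L‖) atBot (nhds 0) := by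
    have h0 : Tendsto (fun s => (f s) ^ 2 - L) atBot (nhds 0) := by
      simpa using h.sub (tendsto_const_nhds (x := L))
    simpa using h0.norm
  have hev : ∀ᶠ s in atBot, ‖(f s) ^ 2 - L‖ < ‖r‖ ^ 2 / 2 :=
    hnorm.eventually (gt_mem_nhds (by positivity))
  obtain ⟨a, ha⟩ := eventually_atBot.mp hev
  have hprod : ∀ (r' : ℂ), r' ^ 2 = L → ∀ s, ‖f s - r'‖ * ‖f s + r'‖ = ‖(f s) ^ 2 - L‖ := by
    intro r' hr' s
    rw [← norm_mul]
    congr 1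
    rw [← hr']; ring
  have hboth : ∀ (r' : ℂ) (s : ℝ), ¬(‖f s - r'‖ < ‖r'‖ ∧ ‖f s + r'‖ < ‖r'‖) := by
    rintro r' s ⟨h1', h2'⟩
    have key : 2 * ‖r'‖ ≤ ‖f s - r'‖ + ‖f s + r'‖ := by
      calc 2 * ‖r'‖ = ‖(f s + r') - (f s - r')‖ := by
            rw [show (f s + r') - (f s - r') = 2 * r' by ring, norm_mul]
            norm_num
        _ ≤ ‖f s + r'‖ + ‖f s - r'‖ := norm_sub_le _ _
        _ = ‖f s - r'‖ + ‖f s + r'‖ := by ring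
    linarith
  set φ : ℝ → ℝ := fun s => ‖f s - r‖ - ‖f s + r‖ with hφdef
  have hφc : Continuous φ := ((hf.sub continuous_const).norm).sub ((hf.add continuous_const).norm)
  have hφne : ∀ s ≤ a, φ s ≠ 0 := by
    intro s hs h0
    have heq : ‖f s - r‖ = ‖f s + r‖ := by
      have : ‖f s - r‖ - ‖f s + r‖ = 0 := h0
      linarith
    by_cases hcase : ‖f s - r‖ < ‖r‖
    · exact hboth r s ⟨hcase, heq ▸ hcase⟩
    · push_neg at hcase
      have h1 : ‖r‖ * ‖r‖ ≤ ‖f s - r‖ * ‖f s + r‖ :=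
        mul_le_mul hcase (heq ▸ hcase) hrpos.le (le_trans hrpos.le hcase)
      have h2 := hprod r hr s
      have h3 := ha s hs
      nlinarith
  have hsign : (∀ s ≤ a, φ s < 0) ∨ (∀ s ≤ a, 0 < φ s) := by
    rcases lt_or_gt_of_ne (hφne a le_rfl) with hA | hA
    · left
      intro s hs
      rcases lt_or_gt_of_ne (hφne s hs) with h' | h'
      · exact h'
      · exfalso
        have hsub : Set.uIcc (φ s) (φ a) ⊆ φ '' Set.uIcc s a :=
          intermediate_value_uIcc hφc.continuousOn
        have h0 : (0 : ℝ) ∈ Set.uIcc (φ s) (φ a) := Set.mem_uIcc.mpr (Or.inr ⟨hA.le, h'.le⟩)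
        obtain ⟨x, hx, hx0⟩ := hsub h0
        rw [Set.uIcc_of_le hs] at hx
        exact hφne x hx.2 hx0
    · right
      intro s hs
      rcases lt_or_gt_of_ne (hφne s hs) with h' | h'
      · exfalso
        have hsub : Set.uIcc (φ s) (φ a) ⊆ φ '' Set.uIcc s a :=
          intermediate_value_uIcc hφc.continuousOn
        have h0 : (0 : ℝ) ∈ Set.uIcc (φ s) (φ a) := Set.mem_uIcc.mpr (Or.inl ⟨h'.le, hA.le⟩)
        obtain ⟨x, hx, hx0⟩ := hsub h0
        rw [Set.uIcc_of_le hs] at hx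
        exact hφne x hx.2 hx0
      · exact h'
  have main : ∀ r' : ℂ, r' ^ 2 = L → (∀ s ≤ a, ‖f s - r'‖ < ‖f s + r'‖) →
      Tendsto f atBot (nhds r') := by
    intro r' hr'2 hlt
    have hr'pos : 0 < ‖r'‖ := norm_pos_iff.mpr (fun h0 => hL (by rw [← hr'2, h0]; ring))
    have key : ∀ s ≤ a, ‖f s - r'‖ ≤ ‖(f s) ^ 2 - L‖ / ‖r'‖ := by
      intro s hs
      have hge : ‖r'‖ ≤ ‖f s + r'‖ := by
        by_contra hcon
        push_neg at hcon
        exact hboth r' s ⟨(hlt s hs).trans hcon, hcon⟩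
      rw [le_div_iff₀ hr'pos]
      calc ‖f s - r'‖ * ‖r'‖ ≤ ‖f s - r'‖ * ‖f s + r'‖ :=
            mul_le_mul_of_nonneg_left hge (norm_nonneg _)
        _ = ‖(f s) ^ 2 - L‖ := hprod r' hr'2 s
    rw [tendsto_iff_norm_sub_tendsto_zero]
    apply squeeze_zero' (Eventually.of_forall fun s => norm_nonneg _)
      (eventually_atBot.mpr ⟨a, key⟩)
    simpa using hnorm.div_const ‖r'‖
  rcases hsign with hneg | hpos
  · refine ⟨r, hr, main r hr fun s hs => ?_⟩
    have := hneg s hs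
    simp only [hφdef] at this
    linarith
  · refine ⟨-r, by rw [show (-r) ^ 2 = r ^ 2 by ring]; exact hr, main (-r)
      (by rw [show (-r) ^ 2 = r ^ 2 by ring]; exact hr) fun s hs => ?_⟩
    have := hpos s hs
    simp only [hφdef] at this
    rw [sub_neg_eq_add, ← sub_eq_add_neg]
    linarith


lemma aux_param_unif (Φ : (ℂ × ℂ × ℂ) → (ℂ × ℂ) → ℂ)
    (hΦ : Continuous fun z : (ℂ × ℂ × ℂ) × (ℂ × ℂ) => Φ z.1 z.2)
    (x₀ : ℂ × ℂ × ℂ) (l : Filter ℝ) (cf : ℝ → ℂ × ℂ × ℂ)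
    (hc : Tendsto cf l (nhds x₀)) (Q : Set (ℂ × ℂ)) (hQ : IsCompact Q) :
    TendstoUniformlyOn (fun t p => Φ (cf t) p) (Φ x₀) l Q := by
  haveI : CompactSpace Q := isCompact_iff_compactSpace.mp hQ
  have h1 : TendstoUniformly (fun x (q : Q) => Φ x q) (fun q : Q => Φ x₀ q) (nhds x₀) := by
    apply Continuous.tendstoUniformly
    exact hΦ.comp (continuous_fst.prodMk (continuous_subtype_val.comp continuous_snd))
  rw [tendstoUniformlyOn_iff_tendstoUniformly_comp_coe]
  intro u hu
  exact hc.eventually (h1 u hu)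

/-- With `K = [[δ,c],[c,δ']]`, `(1±c)² ≠ δδ'`, `D` nonvanishing on ℝ, `g` the continuous
square root of `D` on ℝ with `g 0 = 2`, and `G(t,·,·)` the `K`-ordered expression of
`e_∗^{t(1/(iℏ))u∘v}`: the limit `w = lim_{s→−∞} e^s g(s)` exists, `w² = (1+c)² − δδ'`, and,
uniformly on compact subsets of ℂ², `e^{−t/2}G(t,u,v)` (the `K`-ordered expression of
`e_∗^{t(1/(iℏ))u∗v}`) converges as `t → −∞` to the vacuum
`(2/w)·exp((1/(iℏ))(δ'u² − 2(1+c)uv + δv²)/((1+c)² − δδ'))`, and to `0` as `t → +∞`. -/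
theorem statement4 (ℏ δ δ' c : ℂ) (hℏ : ℏ ≠ 0)
    (h1 : (1 + c) ^ 2 ≠ δ * δ') (h2 : (1 - c) ^ 2 ≠ δ * δ')
    (Δ D : ℂ → ℂ)
    (hΔ : ∀ t, Δ t = exp t + exp (-t) - c * (exp t - exp (-t)))
    (hD : ∀ t, D t = (Δ t) ^ 2 - (exp t - exp (-t)) ^ 2 * (δ * δ'))
    (hDR : ∀ s : ℝ, D s ≠ 0)
    (g : ℝ → ℂ) (hgc : Continuous g) (hg2 : ∀ s : ℝ, (g s) ^ 2 = D s) (hg0 : g 0 = 2)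
    (G : ℝ → ℂ → ℂ → ℂ)
    (hG : ∀ (t : ℝ) (u v : ℂ), G t u v =
      2 / g (t / 2) * exp ((1 / (Complex.I * ℏ)) *
        ((exp ((t : ℂ) / 2) - exp (-(t : ℂ) / 2)) / D ((t : ℂ) / 2)) *
        ((exp ((t : ℂ) / 2) - exp (-(t : ℂ) / 2)) * (δ' * u ^ 2 + δ * v ^ 2)
          + 2 * Δ ((t : ℂ) / 2) * u * v))) :
    ∃ w : ℂ,
      Tendsto (fun s : ℝ => exp (s : ℂ) * g s) atBot (nhds w) ∧
      w ^ 2 = (1 + c) ^ 2 - δ * δ' ∧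
      (∀ Q : Set (ℂ × ℂ), IsCompact Q →
        TendstoUniformlyOn
          (fun (t : ℝ) (p : ℂ × ℂ) => exp (-(t : ℂ) / 2) * G t p.1 p.2)
          (fun p => 2 / w * exp ((1 / (Complex.I * ℏ)) *
            (δ' * p.1 ^ 2 - 2 * (1 + c) * p.1 * p.2 + δ * p.2 ^ 2) /
              ((1 + c) ^ 2 - δ * δ')))
          atBot Q ∧
        TendstoUniformlyOn
          (fun (t : ℝ) (p : ℂ × ℂ) => exp (-(t : ℂ) / 2) * G t p.1 p.2)
          (fun _ => 0) atTop Q) := by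
  set q : ℂ := 1 / (Complex.I * ℏ) with hqdef
  have hL0 : (1 + c) ^ 2 - δ * δ' ≠ 0 := sub_ne_zero_of_ne h1
  have hL'0 : (1 - c) ^ 2 - δ * δ' ≠ 0 := sub_ne_zero_of_ne h2
  have hgne : ∀ s : ℝ, g s ≠ 0 := fun s h0 => hDR s (by rw [← hg2 s, h0]; ring)
  have hcast : ∀ t : ℝ, ((t / 2 : ℝ) : ℂ) = (t : ℂ) / 2 := fun t => by push_cast; ring
  have hDne : ∀ t : ℝ, D ((t : ℂ) / 2) ≠ 0 := fun t => by rw [← hcast]; exact hDR (t / 2)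
  have ht2 : Tendsto (fun t : ℝ => t / 2) atBot atBot :=
    tendsto_atBot_atBot.2 fun b => ⟨2 * b, fun a ha => by linarith⟩
  have ht2' : Tendsto (fun t : ℝ => t / 2) atTop atTop :=
    tendsto_atTop_atTop.2 fun b => ⟨2 * b, fun a ha => by linarith⟩
  -- basic exponential limits
  have hε : Tendsto (fun t : ℝ => Complex.exp ((t:ℂ)/2)) atBot (nhds 0) := by
    have h1' : Tendsto (fun t : ℝ => Real.exp (t / 2)) atBot (nhds 0) :=
      Real.tendsto_exp_atBot.comp ht2
    have h2' := (Complex.continuous_ofReal.tendsto 0).comp h1'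
    have heq : (fun t : ℝ => Complex.exp ((t:ℂ)/2)) = fun t : ℝ => ((Real.exp (t/2) : ℝ) : ℂ) := by
      funext t; rw [Complex.ofReal_exp]; norm_num
    rw [heq, show ((0:ℂ)) = ((0:ℝ):ℂ) by norm_num]
    exact h2'
  have hε' : Tendsto (fun t : ℝ => Complex.exp (-(t:ℂ)/2)) atTop (nhds 0) := by
    have hm : Tendsto (fun t : ℝ => -(t / 2)) atTop atBot :=
      tendsto_atTop_atBot.2 fun b => ⟨-2 * b, fun a ha => by linarith⟩
    have h1' : Tendsto (fun t : ℝ => Real.exp (-(t / 2))) atTop (nhds 0) :=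
      Real.tendsto_exp_atBot.comp hm
    have h2' := (Complex.continuous_ofReal.tendsto 0).comp h1'
    have heq : (fun t : ℝ => Complex.exp (-(t:ℂ)/2))
        = fun t : ℝ => ((Real.exp (-(t/2)) : ℝ) : ℂ) := by
      funext t; rw [Complex.ofReal_exp]; congr 1; push_cast; ring
    rw [heq, show ((0:ℂ)) = ((0:ℝ):ℂ) by norm_num]
    exact h2'
  have hε0 : Tendsto (fun s : ℝ => Complex.exp (s:ℂ)) atBot (nhds 0) := by
    have h2' := (Complex.continuous_ofReal.tendsto 0).comp Real.tendsto_exp_atBot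
    have heq : (fun s : ℝ => Complex.exp (s:ℂ)) = fun s : ℝ => ((Real.exp s : ℝ) : ℂ) := by
      funext s; rw [Complex.ofReal_exp]
    rw [heq, show ((0:ℂ)) = ((0:ℝ):ℂ) by norm_num]
    exact h2'
  have hY : Tendsto (fun u : ℝ => Complex.exp (-(u:ℂ))) atTop (nhds 0) := by
    have h1' : Tendsto (fun u : ℝ => Real.exp (-u)) atTop (nhds 0) :=
      Real.tendsto_exp_atBot.comp tendsto_neg_atTop_atBot
    have h2' := (Complex.continuous_ofReal.tendsto 0).comp h1'
    have heq : (fun u : ℝ => Complex.exp (-(u:ℂ))) = fun u : ℝ => ((Real.exp (-u) : ℝ) : ℂ) := by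
      funext u; rw [Complex.ofReal_exp]; push_cast; ring_nf
    rw [heq, show ((0:ℂ)) = ((0:ℝ):ℂ) by norm_num]
    exact h2'
  -- the function f and its limit w at -∞
  set f : ℝ → ℂ := fun s => Complex.exp (s : ℂ) * g s with hfdef
  have hx2 : Tendsto (fun s : ℝ => (Complex.exp (s:ℂ))^2) atBot (nhds 0) := by
    simpa using hε0.pow 2
  have hfsq : ∀ s : ℝ, (f s)^2 =
      ((Complex.exp (s:ℂ))^2 + 1 - c*((Complex.exp (s:ℂ))^2 - 1))^2
        - ((Complex.exp (s:ℂ))^2 - 1)^2 * (δ*δ') := by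
    intro s
    simp only [hfdef]
    rw [mul_pow, hg2 s, hD, hΔ, Complex.exp_neg]
    have h := Complex.exp_ne_zero (s:ℂ)
    field_simp
  have hfL : Tendsto (fun s => (f s)^2) atBot (nhds ((1+c)^2 - δ*δ')) := by
    simp only [hfsq]
    have hA : Tendsto (fun s : ℝ => (Complex.exp (s:ℂ))^2 - 1) atBot (nhds ((0:ℂ)-1)) :=
      hx2.sub tendsto_const_nhds
    have hB : Tendsto (fun s : ℝ => (Complex.exp (s:ℂ))^2 + 1 - c*((Complex.exp (s:ℂ))^2 - 1))
        atBot (nhds (((0:ℂ)+1) - c*((0:ℂ)-1))) :=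
      (hx2.add tendsto_const_nhds).sub (hA.const_mul c)
    have h3' := (hB.pow 2).sub ((hA.pow 2).mul_const (δ*δ'))
    rw [show (((0:ℂ)+1) - c*((0:ℂ)-1))^2 - ((0:ℂ)-1)^2*(δ*δ') = (1+c)^2 - δ*δ' by ring] at h3'
    exact h3'
  have hfc : Continuous f := (Complex.continuous_exp.comp Complex.continuous_ofReal).mul hgc
  obtain ⟨w, hw2, hwt⟩ := aux_sqrt_limit f hfc ((1+c)^2 - δ*δ') hL0 hfL
  have hw0 : w ≠ 0 := fun h0 => hL0 (by rw [← hw2, h0]; ring)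
  -- the function h₂ and its limit w' at +∞
  set h₂ : ℝ → ℂ := fun s => Complex.exp (-(s : ℂ)) * g s with hh₂def
  have hY2 : Tendsto (fun u : ℝ => (Complex.exp (-(u:ℂ)))^2) atTop (nhds 0) := by
    simpa using hY.pow 2
  have hhsq : ∀ u : ℝ, (h₂ u)^2 =
      (1 + (Complex.exp (-(u:ℂ)))^2 - c*(1 - (Complex.exp (-(u:ℂ)))^2))^2
        - (1 - (Complex.exp (-(u:ℂ)))^2)^2 * (δ*δ') := by
    intro u
    simp only [hh₂def]
    rw [mul_pow, hg2 u, hD, hΔ, Complex.exp_neg]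
    have h := Complex.exp_ne_zero (u:ℂ)
    field_simp
  have hH : Tendsto (fun u : ℝ => (h₂ u)^2) atTop (nhds ((1-c)^2 - δ*δ')) := by
    simp only [hhsq]
    have hA : Tendsto (fun u : ℝ => 1 - (Complex.exp (-(u:ℂ)))^2) atTop (nhds ((1:ℂ)-0)) :=
      tendsto_const_nhds.sub hY2
    have hB : Tendsto (fun u : ℝ => 1 + (Complex.exp (-(u:ℂ)))^2
          - c*(1 - (Complex.exp (-(u:ℂ)))^2)) atTop (nhds (((1:ℂ)+0) - c*((1:ℂ)-0))) :=
      (tendsto_const_nhds.add hY2).sub (hA.const_mul c)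
    have h3' := (hB.pow 2).sub ((hA.pow 2).mul_const (δ*δ'))
    rw [show (((1:ℂ)+0) - c*((1:ℂ)-0))^2 - ((1:ℂ)-0)^2*(δ*δ') = (1-c)^2 - δ*δ' by ring] at h3'
    exact h3'
  have hh₂c : Continuous h₂ := (Complex.continuous_exp.comp Complex.continuous_ofReal.neg).mul hgc
  obtain ⟨w', hw'2, hw't⟩ := aux_sqrt_limit (fun s => h₂ (-s)) (hh₂c.comp continuous_neg)
    ((1-c)^2 - δ*δ') hL'0 (hH.comp tendsto_neg_atBot_atTop)
  have hh : Tendsto h₂ atTop (nhds w') := by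
    have h := hw't.comp tendsto_neg_atTop_atBot
    simp only [Function.comp_def, neg_neg] at h
    exact h
  have hw'0 : w' ≠ 0 := fun h0 => hL'0 (by rw [← hw'2, h0]; ring)

  -- identities at t-level (atBot, with x = exp(t/2))
  have hxE : ∀ t : ℝ, Complex.exp ((t:ℂ)/2) * (Complex.exp ((t:ℂ)/2) - Complex.exp (-(t:ℂ)/2))
      = (Complex.exp ((t:ℂ)/2))^2 - 1 := by
    intro t
    rw [show -(t:ℂ)/2 = -((t:ℂ)/2) by ring, Complex.exp_neg]
    have h := Complex.exp_ne_zero ((t:ℂ)/2)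
    field_simp
  have hxΔ : ∀ t : ℝ, Complex.exp ((t:ℂ)/2) * Δ ((t:ℂ)/2)
      = (Complex.exp ((t:ℂ)/2))^2 + 1 - c * ((Complex.exp ((t:ℂ)/2))^2 - 1) := by
    intro t
    rw [hΔ, Complex.exp_neg]
    have h := Complex.exp_ne_zero ((t:ℂ)/2)
    field_simp
  have hxD : ∀ t : ℝ, (Complex.exp ((t:ℂ)/2))^2 * D ((t:ℂ)/2)
      = ((Complex.exp ((t:ℂ)/2))^2 + 1 - c * ((Complex.exp ((t:ℂ)/2))^2 - 1))^2
        - ((Complex.exp ((t:ℂ)/2))^2 - 1)^2 * (δ * δ') := by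
    intro t
    rw [hD, hΔ, Complex.exp_neg]
    have h := Complex.exp_ne_zero ((t:ℂ)/2)
    field_simp
  -- limits at atBot
  have hx2B : Tendsto (fun t : ℝ => (Complex.exp ((t:ℂ)/2))^2) atBot (nhds 0) := by
    simpa using hε.pow 2
  have hA1 : Tendsto (fun t : ℝ => (Complex.exp ((t:ℂ)/2))^2 - 1) atBot (nhds ((0:ℂ)-1)) :=
    hx2B.sub tendsto_const_nhds
  have hEB : Tendsto (fun t : ℝ => Complex.exp ((t:ℂ)/2) *
      (Complex.exp ((t:ℂ)/2) - Complex.exp (-(t:ℂ)/2))) atBot (nhds (-1)) := by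
    simp only [hxE]
    have h := hx2B.sub (tendsto_const_nhds (x := (1:ℂ)))
    rw [show (0:ℂ)-1 = -1 by ring] at h
    exact h
  have hΔB : Tendsto (fun t : ℝ => Complex.exp ((t:ℂ)/2) * Δ ((t:ℂ)/2)) atBot (nhds (1+c)) := by
    simp only [hxΔ]
    have h := (hx2B.add (tendsto_const_nhds (x := (1:ℂ)))).sub (hA1.const_mul c)
    rw [show ((0:ℂ)+1) - c*((0:ℂ)-1) = 1+c by ring] at h
    exact h
  have hDB : Tendsto (fun t : ℝ => (Complex.exp ((t:ℂ)/2))^2 * D ((t:ℂ)/2)) atBot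
      (nhds ((1+c)^2 - δ*δ')) := by
    simp only [hxD]
    have hB := (hx2B.add (tendsto_const_nhds (x := (1:ℂ)))).sub (hA1.const_mul c)
    have h3 := (hB.pow 2).sub ((hA1.pow 2).mul_const (δ*δ'))
    rw [show (((0:ℂ)+1) - c*((0:ℂ)-1))^2 - ((0:ℂ)-1)^2*(δ*δ') = (1+c)^2 - δ*δ' by ring] at h3
    exact h3
  -- component limits at atBot
  have hC₁B : Tendsto (fun t : ℝ =>
      q * (Complex.exp ((t:ℂ)/2) - Complex.exp (-(t:ℂ)/2))^2 / D ((t:ℂ)/2)) atBot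
      (nhds (q * (-1:ℂ)^2 / ((1+c)^2 - δ*δ'))) := by
    have heq : ∀ t : ℝ, q * (Complex.exp ((t:ℂ)/2) - Complex.exp (-(t:ℂ)/2))^2 / D ((t:ℂ)/2)
        = q * (Complex.exp ((t:ℂ)/2) * (Complex.exp ((t:ℂ)/2) - Complex.exp (-(t:ℂ)/2)))^2
          / ((Complex.exp ((t:ℂ)/2))^2 * D ((t:ℂ)/2)) := by
      intro t
      have h1' := Complex.exp_ne_zero ((t:ℂ)/2)
      have h2' := hDne t
      field_simp
    simp only [heq]
    exact (tendsto_const_nhds.mul (hEB.pow 2)).div hDB hL0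
  have hC₂B : Tendsto (fun t : ℝ =>
      q * (2 * (Complex.exp ((t:ℂ)/2) - Complex.exp (-(t:ℂ)/2)) * Δ ((t:ℂ)/2)) / D ((t:ℂ)/2))
      atBot (nhds (q * (2 * (-1:ℂ) * (1+c)) / ((1+c)^2 - δ*δ'))) := by
    have heq : ∀ t : ℝ,
        q * (2 * (Complex.exp ((t:ℂ)/2) - Complex.exp (-(t:ℂ)/2)) * Δ ((t:ℂ)/2)) / D ((t:ℂ)/2)
        = q * (2 * (Complex.exp ((t:ℂ)/2) * (Complex.exp ((t:ℂ)/2) - Complex.exp (-(t:ℂ)/2)))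
            * (Complex.exp ((t:ℂ)/2) * Δ ((t:ℂ)/2)))
          / ((Complex.exp ((t:ℂ)/2))^2 * D ((t:ℂ)/2)) := by
      intro t
      have h1' := Complex.exp_ne_zero ((t:ℂ)/2)
      have h2' := hDne t
      field_simp
    simp only [heq]
    exact (tendsto_const_nhds.mul ((tendsto_const_nhds.mul hEB).mul hΔB)).div hDB hL0
  have hAB : Tendsto (fun t : ℝ => 2 * Complex.exp (-(t:ℂ)/2) / g (t/2)) atBot (nhds (2/w)) := by
    have heq : ∀ t : ℝ, 2 * Complex.exp (-(t:ℂ)/2) / g (t/2) = 2 / f (t/2) := by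
      intro t
      simp only [hfdef]
      rw [hcast t, show -(t:ℂ)/2 = -((t:ℂ)/2) by ring, Complex.exp_neg]
      have h1' := Complex.exp_ne_zero ((t:ℂ)/2)
      have h2' := hgne (t/2)
      field_simp
    simp only [heq]
    exact tendsto_const_nhds.div (hwt.comp ht2) hw0
  -- identities at t-level (atTop, with y = exp(-t/2))
  have hyE : ∀ t : ℝ, Complex.exp (-(t:ℂ)/2) * (Complex.exp ((t:ℂ)/2) - Complex.exp (-(t:ℂ)/2))
      = 1 - (Complex.exp (-(t:ℂ)/2))^2 := by
    intro t
    have hxy : Complex.exp ((t:ℂ)/2) = (Complex.exp (-(t:ℂ)/2))⁻¹ := by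
      rw [← Complex.exp_neg]; congr 1; ring
    rw [hxy]
    have h := Complex.exp_ne_zero (-(t:ℂ)/2)
    field_simp
  have hyΔ : ∀ t : ℝ, Complex.exp (-(t:ℂ)/2) * Δ ((t:ℂ)/2)
      = 1 + (Complex.exp (-(t:ℂ)/2))^2 - c * (1 - (Complex.exp (-(t:ℂ)/2))^2) := by
    intro t
    have hxy : Complex.exp ((t:ℂ)/2) = (Complex.exp (-(t:ℂ)/2))⁻¹ := by
      rw [← Complex.exp_neg]; congr 1; ring
    rw [hΔ, show -((t:ℂ)/2) = -(t:ℂ)/2 by ring, hxy]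
    have h := Complex.exp_ne_zero (-(t:ℂ)/2)
    field_simp
  have hyD : ∀ t : ℝ, (Complex.exp (-(t:ℂ)/2))^2 * D ((t:ℂ)/2)
      = (1 + (Complex.exp (-(t:ℂ)/2))^2 - c * (1 - (Complex.exp (-(t:ℂ)/2))^2))^2
        - (1 - (Complex.exp (-(t:ℂ)/2))^2)^2 * (δ * δ') := by
    intro t
    have hxy : Complex.exp ((t:ℂ)/2) = (Complex.exp (-(t:ℂ)/2))⁻¹ := by
      rw [← Complex.exp_neg]; congr 1; ring
    rw [hD, hΔ, show -((t:ℂ)/2) = -(t:ℂ)/2 by ring, hxy]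
    have h := Complex.exp_ne_zero (-(t:ℂ)/2)
    field_simp
  -- limits at atTop
  have hy2 : Tendsto (fun t : ℝ => (Complex.exp (-(t:ℂ)/2))^2) atTop (nhds 0) := by
    simpa using hε'.pow 2
  have hA1' : Tendsto (fun t : ℝ => 1 - (Complex.exp (-(t:ℂ)/2))^2) atTop (nhds ((1:ℂ)-0)) :=
    tendsto_const_nhds.sub hy2
  have hEB' : Tendsto (fun t : ℝ => Complex.exp (-(t:ℂ)/2) *
      (Complex.exp ((t:ℂ)/2) - Complex.exp (-(t:ℂ)/2))) atTop (nhds 1) := by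
    simp only [hyE]
    have h := (tendsto_const_nhds (x := (1:ℂ))).sub hy2
    rw [show (1:ℂ)-0 = 1 by ring] at h
    exact h
  have hΔB' : Tendsto (fun t : ℝ => Complex.exp (-(t:ℂ)/2) * Δ ((t:ℂ)/2)) atTop (nhds (1-c)) := by
    simp only [hyΔ]
    have h := ((tendsto_const_nhds (x := (1:ℂ))).add hy2).sub (hA1'.const_mul c)
    rw [show ((1:ℂ)+0) - c*((1:ℂ)-0) = 1-c by ring] at h
    exact h
  have hDB' : Tendsto (fun t : ℝ => (Complex.exp (-(t:ℂ)/2))^2 * D ((t:ℂ)/2)) atTop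
      (nhds ((1-c)^2 - δ*δ')) := by
    simp only [hyD]
    have hB := ((tendsto_const_nhds (x := (1:ℂ))).add hy2).sub (hA1'.const_mul c)
    have h3 := (hB.pow 2).sub ((hA1'.pow 2).mul_const (δ*δ'))
    rw [show (((1:ℂ)+0) - c*((1:ℂ)-0))^2 - ((1:ℂ)-0)^2*(δ*δ') = (1-c)^2 - δ*δ' by ring] at h3
    exact h3
  -- component limits at atTop
  have hC₁B' : Tendsto (fun t : ℝ =>
      q * (Complex.exp ((t:ℂ)/2) - Complex.exp (-(t:ℂ)/2))^2 / D ((t:ℂ)/2)) atTop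
      (nhds (q * (1:ℂ)^2 / ((1-c)^2 - δ*δ'))) := by
    have heq : ∀ t : ℝ, q * (Complex.exp ((t:ℂ)/2) - Complex.exp (-(t:ℂ)/2))^2 / D ((t:ℂ)/2)
        = q * (Complex.exp (-(t:ℂ)/2) * (Complex.exp ((t:ℂ)/2) - Complex.exp (-(t:ℂ)/2)))^2
          / ((Complex.exp (-(t:ℂ)/2))^2 * D ((t:ℂ)/2)) := by
      intro t
      have h1' := Complex.exp_ne_zero (-(t:ℂ)/2)
      have h2' := hDne t
      field_simp
    simp only [heq]
    exact (tendsto_const_nhds.mul (hEB'.pow 2)).div hDB' hL'0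
  have hC₂B' : Tendsto (fun t : ℝ =>
      q * (2 * (Complex.exp ((t:ℂ)/2) - Complex.exp (-(t:ℂ)/2)) * Δ ((t:ℂ)/2)) / D ((t:ℂ)/2))
      atTop (nhds (q * (2 * (1:ℂ) * (1-c)) / ((1-c)^2 - δ*δ'))) := by
    have heq : ∀ t : ℝ,
        q * (2 * (Complex.exp ((t:ℂ)/2) - Complex.exp (-(t:ℂ)/2)) * Δ ((t:ℂ)/2)) / D ((t:ℂ)/2)
        = q * (2 * (Complex.exp (-(t:ℂ)/2) * (Complex.exp ((t:ℂ)/2) - Complex.exp (-(t:ℂ)/2)))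
            * (Complex.exp (-(t:ℂ)/2) * Δ ((t:ℂ)/2)))
          / ((Complex.exp (-(t:ℂ)/2))^2 * D ((t:ℂ)/2)) := by
      intro t
      have h1' := Complex.exp_ne_zero (-(t:ℂ)/2)
      have h2' := hDne t
      field_simp
    simp only [heq]
    exact (tendsto_const_nhds.mul ((tendsto_const_nhds.mul hEB').mul hΔB')).div hDB' hL'0
  have hAB' : Tendsto (fun t : ℝ => 2 * Complex.exp (-(t:ℂ)/2) / g (t/2)) atTop (nhds 0) := by
    have heq : ∀ t : ℝ, 2 * Complex.exp (-(t:ℂ)/2) / g (t/2)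
        = 2 * (Complex.exp (-(t:ℂ)/2))^2 / h₂ (t/2) := by
      intro t
      simp only [hh₂def]
      rw [show -((t/2:ℝ):ℂ) = -(t:ℂ)/2 by push_cast; ring]
      have h1' := Complex.exp_ne_zero (-(t:ℂ)/2)
      have h2' := hgne (t/2)
      field_simp
    simp only [heq]
    have h := ((tendsto_const_nhds (x := (2:ℂ))).mul hy2).div (hh.comp ht2') hw'0
    rw [show (2:ℂ)*0/w' = 0 by simp] at h
    exact h
  -- the parametrized family
  set Φ : (ℂ × ℂ × ℂ) → (ℂ × ℂ) → ℂ := fun x p =>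
    x.1 * Complex.exp (x.2.1 * (δ' * p.1^2 + δ * p.2^2) + x.2.2 * (p.1 * p.2)) with hΦdef
  have hΦc : Continuous fun z : (ℂ × ℂ × ℂ) × (ℂ × ℂ) => Φ z.1 z.2 := by
    simp only [hΦdef]
    fun_prop
  set cf : ℝ → ℂ × ℂ × ℂ := fun t =>
    (2 * Complex.exp (-(t:ℂ)/2) / g (t/2),
     q * (Complex.exp ((t:ℂ)/2) - Complex.exp (-(t:ℂ)/2))^2 / D ((t:ℂ)/2),
     q * (2 * (Complex.exp ((t:ℂ)/2) - Complex.exp (-(t:ℂ)/2)) * Δ ((t:ℂ)/2)) / D ((t:ℂ)/2))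
    with hcfdef
  have hfun : (fun (t:ℝ) (p : ℂ × ℂ) => Complex.exp (-(t:ℂ)/2) * G t p.1 p.2)
      = fun t p => Φ (cf t) p := by
    funext t p
    rw [hG]
    simp only [hΦdef, hcfdef]
    try dsimp only
    rw [show q * ((Complex.exp ((t:ℂ)/2) - Complex.exp (-(t:ℂ)/2)) / D ((t:ℂ)/2)) *
        ((Complex.exp ((t:ℂ)/2) - Complex.exp (-(t:ℂ)/2)) * (δ' * p.1^2 + δ * p.2^2)
          + 2 * Δ ((t:ℂ)/2) * p.1 * p.2)
      = q * (Complex.exp ((t:ℂ)/2) - Complex.exp (-(t:ℂ)/2))^2 / D ((t:ℂ)/2)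
          * (δ' * p.1^2 + δ * p.2^2)
        + q * (2 * (Complex.exp ((t:ℂ)/2) - Complex.exp (-(t:ℂ)/2)) * Δ ((t:ℂ)/2)) / D ((t:ℂ)/2)
          * (p.1 * p.2) by ring]
    ring
  refine ⟨w, hwt, hw2, fun Q hQ => ⟨?_, ?_⟩⟩
  · rw [hfun]
    have h := aux_param_unif Φ hΦc (2/w, q * (-1:ℂ)^2 / ((1+c)^2 - δ*δ'),
        q * (2 * (-1:ℂ) * (1+c)) / ((1+c)^2 - δ*δ')) atBot cf
        (hAB.prodMk_nhds (hC₁B.prodMk_nhds hC₂B)) Q hQ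
    apply h.congr_right
    intro p hp
    simp only [hΦdef]
    try dsimp only
    rw [show q * (-1:ℂ)^2 / ((1+c)^2 - δ*δ') * (δ' * p.1^2 + δ * p.2^2)
        + q * (2 * (-1:ℂ) * (1+c)) / ((1+c)^2 - δ*δ') * (p.1 * p.2)
      = q * (δ' * p.1^2 - 2*(1+c)*p.1*p.2 + δ * p.2^2) / ((1+c)^2 - δ*δ') by ring]
  · rw [hfun]
    have h := aux_param_unif Φ hΦc (0, q * (1:ℂ)^2 / ((1-c)^2 - δ*δ'),
        q * (2 * (1:ℂ) * (1-c)) / ((1-c)^2 - δ*δ')) atTop cf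
        (hAB'.prodMk_nhds (hC₁B'.prodMk_nhds hC₂B')) Q hQ
    apply h.congr_right
    intro p hp
    simp only [hΦdef]
    try dsimp only
    simp
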